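/- Let s be a weak composition, T an s-decreasing tree, and (a,b), (c,d) tree ascents of T with a < c. Let Z and Q be the s-tree rotations of T along (a,b) and (c,d) respectively. If either (a,b) is not a tree ascent of Q or (c,d) is not a tree ascent of Z, then b = c and s(c) > 0. Moreover, if (a,b) is not a tree ascent of Q, then a ∈ T^c_0; and if (c,d) is not a tree ascent of Z, then a ∈ T^c_{s(c)-1}. -/
import Mathlib


open scoped Classical

/-- An `s`-decreasing tree with internal vertices `1,…,n` (the root is `n`), encoded by
recording, for each non-root internal vertex `v`, its parent `parent v` (an internal vertex
with a larger label, so that labels decrease away from the root) and the index `idx v` of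
the child slot of `parent v` (among `0,…,s (parent v)`, left to right) containing `v`.
Distinct internal vertices occupy distinct child slots; all remaining slots are leaves. -/
structure SDecTree (n : ℕ) (s : ℕ → ℕ) where
  parent : ℕ → ℕ
  idx : ℕ → ℕ
  parent_gt : ∀ v, 1 ≤ v → v < n → v < parent v
  parent_le : ∀ v, 1 ≤ v → v < n → parent v ≤ n
  idx_le : ∀ v, 1 ≤ v → v < n → idx v ≤ s (parent v)
  slot_inj : ∀ v w, 1 ≤ v → v < n → 1 ≤ w → w < n →
      parent v = parent w → idx v = idx w → v = w
  parent_out : ∀ v, v = 0 ∨ n ≤ v → parent v = 0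
  idx_out : ∀ v, v = 0 ∨ n ≤ v → idx v = 0

namespace SDecTree

variable {n : ℕ} {s : ℕ → ℕ}

/-- `y` is a weak ancestor of `x`, i.e. `x` is a labeled vertex of the subtree `T^y`. -/
def Descend (T : SDecTree n s) (x y : ℕ) : Prop :=
  ∃ k, T.parent^[k] x = y ∧ ∀ m ≤ k, 1 ≤ T.parent^[m] x ∧ T.parent^[m] x ≤ n

/-- `x` is a labeled vertex of the subtree `T^y_j` rooted at the `j`-th child of `y`. -/
def InSub (T : SDecTree n s) (y j x : ℕ) : Prop :=
  ∃ c, T.Descend x c ∧ T.parent c = y ∧ T.idx c = j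

/-- `x` lies strictly left of `y` in the planar tree `T`. -/
def LeftOf (T : SDecTree n s) (x y : ℕ) : Prop :=
  ∃ z j₁ j₂, j₁ < j₂ ∧ T.InSub z j₁ x ∧ T.InSub z j₂ y

/-- The cardinality `#_T(y,x)` of the pair `(y,x)`: it is `j` if `x ∈ T^y_j`
(so `0` if `x ∈ T^y_0` and `s y` if `x ∈ T^y_{s y}`), `0` if `x` is left of `y`, and
`s y` if `x` is right of `y`; it is `0` for out-of-range pairs. -/
noncomputable def card (T : SDecTree n s) (y x : ℕ) : ℕ :=
  if h : ∃ j, T.InSub y j x then h.choose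
  else if 1 ≤ x ∧ x < y ∧ y ≤ n ∧ ¬ T.LeftOf x y then s y else 0

/-- `x` is a labeled vertex of `T^a ∖ 0`, i.e. of `T^a` with `T^a_0` replaced by a leaf. -/
def InSubMinus0 (T : SDecTree n s) (a x : ℕ) : Prop :=
  x = a ∨ ∃ j, 0 < j ∧ T.InSub a j x

/-- `(a,b)` is a tree ascent of `T`. -/
def TreeAscent (T : SDecTree n s) (a b : ℕ) : Prop :=
  1 ≤ a ∧ a < b ∧ b ≤ n ∧
  (∃ i, i < s b ∧ T.InSub b i a) ∧
  (∀ e j, a < e → e < b → T.InSub e j a → j = s e) ∧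
  (0 < s a → ∀ x, ¬ T.InSub a (s a) x)

end SDecTree

/-- A multi-inversion set (encoded by its multiplicity function) is transitive:
if `a < b < c` then `#(b,a) = 0` or `#(c,a) ≥ #(c,b)`. -/
def IsTransitiveInv (I : ℕ → ℕ → ℕ) : Prop :=
  ∀ a b c, a < b → b < c → I b a = 0 ∨ I c b ≤ I c a

/-- The transitive closure of a multi-inversion set: the smallest (by inclusion, i.e.
pointwise on multiplicities) transitive multi-inversion set containing it. -/
noncomputable def tcInv (I : ℕ → ℕ → ℕ) : ℕ → ℕ → ℕ := fun y x =>
  sInf {m | ∃ J : ℕ → ℕ → ℕ, IsTransitiveInv J ∧ (∀ y' x', I y' x' ≤ J y' x') ∧ J y x = m}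

/-- Add one copy of the inversion `(b,a)` to `I`, capping the multiplicity at `s b`. -/
def addInv (s : ℕ → ℕ) (I : ℕ → ℕ → ℕ) (b a : ℕ) : ℕ → ℕ → ℕ := fun y x =>
  if y = b ∧ x = a then min (I y x + 1) (s y) else I y x

namespace SDecTree

variable {n : ℕ} {s : ℕ → ℕ}

/-- The `s`-weak order: `T ⪯ Z` iff `#_T(y,x) ≤ #_Z(y,x)` for all pairs. -/
def wle (T Z : SDecTree n s) : Prop := ∀ y x, T.card y x ≤ Z.card y x

/-- Strict `s`-weak order. -/
def wlt (T Z : SDecTree n s) : Prop := wle T Z ∧ ¬ wle Z T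

/-- Cover relation in the `s`-weak order. -/
def wcov (T Z : SDecTree n s) : Prop := wlt T Z ∧ ∀ U, wlt T U → wlt U Z → False

/-- `W` is the join of `T` and `Z` in the `s`-weak order. -/
def IsJoin (T Z W : SDecTree n s) : Prop :=
  wle T W ∧ wle Z W ∧ ∀ U, wle T U → wle Z U → wle W U

/-- `Z` is the `s`-tree rotation of `T` along the tree ascent `(a,b)`, i.e.
`inv Z = (inv T + (b,a))^tc`. -/
def IsRotation (T Z : SDecTree n s) (a b : ℕ) : Prop :=
  T.TreeAscent a b ∧
  ∀ y x, 1 ≤ x → x < y → y ≤ n → Z.card y x = tcInv (addInv s T.card b a) y x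

/-- The set `A_T(a,b)` of inversions added by a rotation producing `Z`: the pairs `(f,e)`
with `#_Z(f,e) > #_T(f,e)`. -/
def Aset (T Z : SDecTree n s) : Set (ℕ × ℕ) :=
  {p | T.card p.1 p.2 < Z.card p.1 p.2}

/-- The set `A_T(a,b)` described directly via the transitive closure. -/
def ARot (T : SDecTree n s) (a b : ℕ) : Set (ℕ × ℕ) :=
  {p | T.card p.1 p.2 < tcInv (addInv s T.card b a) p.1 p.2}

/-- The set `F_T(a,c)` (here `b` and `d` are the partners of `a` and `c` in the
respective tree ascents `(a,b)` and `(c,d)`): it is `{(d,e) : e ∈ T^a∖0}` if `b = c`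
and `a ∈ T^c_0`, and empty otherwise. -/
def Fset (T : SDecTree n s) (a b c d : ℕ) : Set (ℕ × ℕ) :=
  {p | b = c ∧ T.InSub c 0 a ∧ p.1 = d ∧ T.InSubMinus0 a p.2}

/-- `T` is an `s`-Tamari tree: `#_T(c,a) ≤ #_T(c,b)` whenever `a < b < c`. -/
def IsTamari (T : SDecTree n s) : Prop :=
  ∀ a b c, a < b → b < c → T.card c a ≤ T.card c b

/-- `(a,b)` is a Tamari tree ascent of `T`: `a` is a non-rightmost child of `b`. -/
def TamariAscent (T : SDecTree n s) (a b : ℕ) : Prop :=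
  1 ≤ a ∧ a < n ∧ T.parent a = b ∧ T.card b a < s b

/-- `Z` is the `s`-Tamari rotation of `T` along the Tamari tree ascent `(a,b)`. -/
def IsTamRotation (T Z : SDecTree n s) (a b : ℕ) : Prop :=
  T.TamariAscent a b ∧
  ∀ y x, 1 ≤ x → x < y → y ≤ n → Z.card y x = tcInv (addInv s T.card b a) y x

/-- Cover relation in the `s`-Tamari lattice. -/
def tamcov (T Z : SDecTree n s) : Prop :=
  IsTamari T ∧ IsTamari Z ∧ wlt T Z ∧ ∀ U, IsTamari U → wlt T U → wlt U Z → False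

/-- `W` is the join of `T` and `Z` in the `s`-Tamari lattice. -/
def IsTamJoin (T Z W : SDecTree n s) : Prop :=
  IsTamari W ∧ wle T W ∧ wle Z W ∧ ∀ U, IsTamari U → wle T U → wle Z U → wle W U

/-- The open interval `(T,Z)` in the `s`-weak order. -/
def OpenInterval (T Z : SDecTree n s) : Set (SDecTree n s) := {U | wlt T U ∧ wlt U Z}

/-- A set of trees forming a chain in the `s`-weak order. -/
def IsChainSet (C : Set (SDecTree n s)) : Prop :=
  C.Pairwise fun U V => wlt U V ∨ wlt V U

/-- The geometric realization of the order complex `Δ(T,Z)` of the open interval `(T,Z)`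
in the `s`-weak order: the space of finitely supported probability vectors on the vertex
set whose support is a chain of the open interval. -/
def orderComplex (T Z : SDecTree n s) : Set (SDecTree n s → ℝ) :=
  {f | (∀ U, 0 ≤ f U) ∧ (Function.support f).Finite ∧
    Function.support f ⊆ OpenInterval T Z ∧ IsChainSet (Function.support f) ∧
    ∑ᶠ U, f U = 1}

/-- The geometric realization of the order complex of the open interval `(T,Z)` in the
`s`-Tamari lattice. -/
def tamOrderComplex (T Z : SDecTree n s) : Set (SDecTree n s → ℝ) :=
  {f | (∀ U, 0 ≤ f U) ∧ (Function.support f).Finite ∧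
    Function.support f ⊆ {U | IsTamari U ∧ wlt T U ∧ wlt U Z} ∧
    IsChainSet (Function.support f) ∧ ∑ᶠ U, f U = 1}

end SDecTree

/-- The list of labels of the consecutive cover relations along a saturated chain,
recorded as a list of poset elements. -/
def labelsOf {α : Type*} (lab : α → α → ℕ) (L : List α) : List ℕ :=
  (L.zip L.tail).map fun p => lab p.1 p.2

namespace SDecTree

variable {n : ℕ} {s : ℕ → ℕ} {U : SDecTree n s}

lemma descend_mem {x y : ℕ} (h : U.Descend x y) :
    1 ≤ x ∧ x ≤ n ∧ 1 ≤ y ∧ y ≤ n := by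
  obtain ⟨k, hk, hc⟩ := h
  have h0 := hc 0 (Nat.zero_le _)
  have hk' := hc k le_rfl
  simp only [Function.iterate_zero, id_eq] at h0
  rw [hk] at hk'
  exact ⟨h0.1, h0.2, hk'.1, hk'.2⟩

lemma descend_refl {x : ℕ} (h1 : 1 ≤ x) (h2 : x ≤ n) : U.Descend x x :=
  ⟨0, rfl, fun m hm => by interval_cases m; simpa using ⟨h1, h2⟩⟩

lemma descend_trans {x y z : ℕ} (h1 : U.Descend x y) (h2 : U.Descend y z) :
    U.Descend x z := by
  obtain ⟨k, hk, hc⟩ := h1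
  obtain ⟨k', hk', hc'⟩ := h2
  refine ⟨k' + k, ?_, ?_⟩
  · rw [Function.iterate_add_apply, hk, hk']
  · intro m hm
    rcases le_or_gt m k with h | h
    · exact hc m h
    · have : m - k ≤ k' := by omega
      have hrw : U.parent^[m] x = U.parent^[m - k] y := by
        rw [← hk, ← Function.iterate_add_apply]
        congr 1; omega
      rw [hrw]; exact hc' _ this

lemma descend_cons {x y : ℕ} (h : U.Descend x y) (hne : x ≠ y) :
    x < U.parent x ∧ x < n ∧ U.Descend (U.parent x) y := by
  obtain ⟨k, hk, hc⟩ := h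
  match k, hk with
  | 0, hk => exact absurd hk hne
  | k + 1, hk =>
    have h0 := hc 0 (Nat.zero_le _)
    simp only [Function.iterate_zero, id_eq] at h0
    have h1 := hc 1 (by omega)
    simp only [Function.iterate_one] at h1
    have hxn : x < n := by
      rcases lt_or_eq_of_le h0.2 with h | h
      · exact h
      · exfalso; have := U.parent_out x (Or.inr h.ge); omega
    refine ⟨U.parent_gt x h0.1 hxn, hxn, k, ?_, ?_⟩
    · rw [← Function.iterate_succ_apply]; exact hk
    · intro m hm
      rw [← Function.iterate_succ_apply]
      exact hc (m + 1) (by omega)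

lemma descend_le {x y : ℕ} (h : U.Descend x y) : x ≤ y := by
  obtain ⟨k, hk, hc⟩ := h
  induction k generalizing x with
  | zero => exact hk.le
  | succ k ih =>
    by_cases hne : x = y
    · exact hne.le
    · obtain ⟨hlt, _, hd⟩ := descend_cons ⟨k + 1, hk, hc⟩ hne
      obtain ⟨k', hk', hc'⟩ := hd
      -- need to apply ih to parent x with length k; but hd has some length k'
      -- easier: direct: parent^[k+1] x = parent^[k] (parent x)
      have hk2 : U.parent^[k] (U.parent x) = y := by
        rw [← Function.iterate_succ_apply]; exact hk
      have hc2 : ∀ m ≤ k, 1 ≤ U.parent^[m] (U.parent x) ∧ U.parent^[m] (U.parent x) ≤ n := by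
        intro m hm
        rw [← Function.iterate_succ_apply]
        exact hc (m + 1) (by omega)
      exact le_trans hlt.le (ih hk2 hc2)

lemma descend_antisymm {x y : ℕ} (h1 : U.Descend x y) (h2 : U.Descend y x) : x = y :=
  le_antisymm (descend_le h1) (descend_le h2)

lemma descend_step {x y : ℕ} (h : U.Descend x y) (hne : x ≠ y) :
    ∃ c, U.Descend x c ∧ U.parent c = y ∧ 1 ≤ c ∧ c ≤ n := by
  obtain ⟨k, hk, hc⟩ := h
  match k, hk with
  | 0, hk => exact absurd hk hne
  | k + 1, hk =>
    refine ⟨U.parent^[k] x, ⟨k, rfl, fun m hm => hc m (by omega)⟩, ?_, ?_⟩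
    · rw [Function.iterate_succ_apply'] at hk; exact hk
    · exact ⟨(hc k (by omega)).1, (hc k (by omega)).2⟩

lemma descend_total {x w w' : ℕ} (h1 : U.Descend x w) (h2 : U.Descend x w') :
    U.Descend w w' ∨ U.Descend w' w := by
  obtain ⟨k, hk, hc⟩ := h1
  obtain ⟨k', hk', hc'⟩ := h2
  rcases le_total k k' with h | h
  · left
    refine ⟨k' - k, ?_, ?_⟩
    · rw [← hk, ← Function.iterate_add_apply]
      rw [show k' - k + k = k' by omega]; exact hk'
    · intro m hm
      rw [← hk, ← Function.iterate_add_apply]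
      exact hc' _ (by omega)
  · right
    refine ⟨k - k', ?_, ?_⟩
    · rw [← hk', ← Function.iterate_add_apply]
      rw [show k - k' + k' = k by omega]; exact hk
    · intro m hm
      rw [← hk', ← Function.iterate_add_apply]
      exact hc _ (by omega)

end SDecTree
namespace SDecTree

variable {n : ℕ} {s : ℕ → ℕ} {U : SDecTree n s}

lemma insub_ranges {y j x : ℕ} (h : U.InSub y j x) : 1 ≤ x ∧ x ≤ n := by
  obtain ⟨c, hd, _, _⟩ := h
  exact ⟨(descend_mem hd).1, (descend_mem hd).2.1⟩

lemma insub_zero {j x : ℕ} (h : U.InSub 0 j x) : j = 0 := by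
  obtain ⟨c, hd, hp, hi⟩ := h
  have hm := descend_mem hd
  have hcn : c = n := by
    by_contra hcn
    have hlt : c < n := lt_of_le_of_ne hm.2.2.2 hcn
    have := U.parent_gt c hm.2.2.1 hlt
    omega
  rw [← hi, hcn, U.idx_out n (Or.inr le_rfl)]

lemma insub_descend {y j x : ℕ} (hy : 1 ≤ y) (h : U.InSub y j x) :
    U.Descend x y ∧ x < y := by
  obtain ⟨c, hd, hp, hi⟩ := h
  have hm := descend_mem hd
  have hcn : c < n := by
    rcases lt_or_eq_of_le hm.2.2.2 with h | h
    · exact h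
    · exfalso; rw [U.parent_out c (Or.inr h.ge)] at hp; omega
  have hcy : c < U.parent c := U.parent_gt c hm.2.2.1 hcn
  have hyn : U.parent c ≤ n := U.parent_le c hm.2.2.1 hcn
  have hdc : U.Descend c y := by
    refine ⟨1, by simpa using hp, ?_⟩
    intro m hm'
    interval_cases m
    · simpa using ⟨hm.2.2.1, hm.2.2.2⟩
    · simp only [Function.iterate_one, hp]
      exact ⟨hy, hp ▸ hyn⟩
  exact ⟨descend_trans hd hdc, lt_of_le_of_lt (descend_le hd) (hp ▸ hcy)⟩

lemma insub_le_s {y j x : ℕ} (hy : 1 ≤ y) (h : U.InSub y j x) : j ≤ s y := by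
  obtain ⟨c, hd, hp, hi⟩ := h
  have hm := descend_mem hd
  have hcn : c < n := by
    rcases lt_or_eq_of_le hm.2.2.2 with h | h
    · exact h
    · exfalso; rw [U.parent_out c (Or.inr h.ge)] at hp; omega
  rw [← hi, ← hp]
  exact U.idx_le c hm.2.2.1 hcn

lemma insub_unique {y j j' x : ℕ} (h : U.InSub y j x) (h' : U.InSub y j' x) : j = j' := by
  by_cases hy : 1 ≤ y
  · obtain ⟨c, hd, hp, hi⟩ := h
    obtain ⟨c', hd', hp', hi'⟩ := h'
    have hmc := descend_mem hd
    have hmc' := descend_mem hd'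
    have hcn : c < n := by
      rcases lt_or_eq_of_le hmc.2.2.2 with h | h
      · exact h
      · exfalso; rw [U.parent_out c (Or.inr h.ge)] at hp; omega
    have hcn' : c' < n := by
      rcases lt_or_eq_of_le hmc'.2.2.2 with h | h
      · exact h
      · exfalso; rw [U.parent_out c' (Or.inr h.ge)] at hp'; omega
    have hcc : c = c' := by
      rcases descend_total hd hd' with h | h
      · by_contra hne
        obtain ⟨_, _, hd2⟩ := descend_cons h hne
        rw [hp] at hd2
        have := descend_le hd2
        have := U.parent_gt c' hmc'.2.2.1 hcn'
        omega
      · by_contra hne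
        obtain ⟨_, _, hd2⟩ := descend_cons h (Ne.symm hne)
        rw [hp'] at hd2
        have := descend_le hd2
        have := U.parent_gt c hmc.2.2.1 hcn
        omega
    rw [← hi, ← hi', hcc]
  · rw [insub_zero (show U.InSub 0 j x by simpa [Nat.lt_one_iff.mp (not_le.mp hy)] using h),
      insub_zero (show U.InSub 0 j' x by simpa [Nat.lt_one_iff.mp (not_le.mp hy)] using h')]

lemma insub_trans {x u w k : ℕ} (hxu : U.Descend x u) (h : U.InSub w k u) :
    U.InSub w k x := by
  obtain ⟨c, hd, hp, hi⟩ := h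
  exact ⟨c, descend_trans hxu hd, hp, hi⟩

lemma descend_insub_exists {x y : ℕ} (h : U.Descend x y) (hne : x ≠ y) :
    ∃ j, U.InSub y j x := by
  obtain ⟨c, hd, hp, _, _⟩ := descend_step h hne
  exact ⟨U.idx c, c, hd, hp, rfl⟩

lemma insub_thru {x w w' m : ℕ} (hxw : U.Descend x w) (hww' : U.Descend w w')
    (hne : w ≠ w') (h : U.InSub w' m x) : U.InSub w' m w := by
  obtain ⟨c, hd, hp, _, _⟩ := descend_step hww' hne
  have h1 : U.InSub w' (U.idx c) w := ⟨c, hd, hp, rfl⟩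
  have h2 : U.InSub w' (U.idx c) x := ⟨c, descend_trans hxw hd, hp, rfl⟩
  rw [insub_unique h h2]
  exact h1

lemma descend_root {x : ℕ} (h1 : 1 ≤ x) (h2 : x ≤ n) : U.Descend x n := by
  have key : ∀ m x, 1 ≤ x → x ≤ n → n - x ≤ m → U.Descend x n := by
    intro m
    induction m with
    | zero =>
      intro x h1 h2 h3
      have : x = n := by omega
      subst this; exact descend_refl h1 h2
    | succ m ih =>
      intro x h1 h2 h3
      by_cases hx : x = n
      · subst hx; exact descend_refl h1 h2
      · have hlt : x < n := lt_of_le_of_ne h2 hx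
        have hp1 : x < U.parent x := U.parent_gt x h1 hlt
        have hp2 : U.parent x ≤ n := U.parent_le x h1 hlt
        have hd : U.Descend x (U.parent x) := by
          refine ⟨1, by simp, ?_⟩
          intro m' hm'
          interval_cases m'
          · simpa using ⟨h1, h2⟩
          · simp only [Function.iterate_one]; exact ⟨by omega, hp2⟩
        exact descend_trans hd (ih (U.parent x) (by omega) hp2 (by omega))
  exact key (n - x) x h1 h2 le_rfl

/-- trichotomy -/
lemma tri {x y : ℕ} (h1 : 1 ≤ x) (hxy : x < y) (h2 : y ≤ n) :
    U.Descend x y ∨ U.LeftOf x y ∨ U.LeftOf y x := by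
  classical
  set M := {w | U.Descend x w ∧ U.Descend y w} with hM
  have hMne : M.Nonempty := ⟨n, descend_root h1 (by omega), descend_root (by omega) h2⟩
  set w₀ := sInf M with hw₀
  have hmem : w₀ ∈ M := Nat.sInf_mem hMne
  obtain ⟨hxw, hyw⟩ := hmem
  by_cases hy0 : w₀ = y
  · left; rw [← hy0]; exact hxw
  by_cases hx0 : w₀ = x
  · exfalso
    have := descend_le hyw
    omega
  obtain ⟨c₁, hd₁, hp₁, hc₁1, hc₁n⟩ := descend_step hxw (Ne.symm hx0)
  obtain ⟨c₂, hd₂, hp₂, hc₂1, hc₂n⟩ := descend_step hyw (Ne.symm hy0)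
  have hw1 : 1 ≤ w₀ := (descend_mem hxw).2.2.1
  have hwn : w₀ ≤ n := (descend_mem hxw).2.2.2
  have hc₁lt : c₁ < n := by
    rcases lt_or_eq_of_le hc₁n with h | h
    · exact h
    · exfalso; rw [U.parent_out c₁ (Or.inr h.ge)] at hp₁; omega
  have hc₂lt : c₂ < n := by
    rcases lt_or_eq_of_le hc₂n with h | h
    · exact h
    · exfalso; rw [U.parent_out c₂ (Or.inr h.ge)] at hp₂; omega
  have hcc : c₁ ≠ c₂ := by
    intro he
    have hc₁M : c₁ ∈ M := ⟨hd₁, he ▸ hd₂⟩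
    have hle := Nat.sInf_le hc₁M
    have := U.parent_gt c₁ hc₁1 hc₁lt
    rw [hp₁] at this
    omega
  have hii : U.idx c₁ ≠ U.idx c₂ := by
    intro he
    exact hcc (U.slot_inj c₁ c₂ hc₁1 hc₁lt hc₂1 hc₂lt (hp₁.trans hp₂.symm) he)
  have hI₁ : U.InSub w₀ (U.idx c₁) x := ⟨c₁, hd₁, hp₁, rfl⟩
  have hI₂ : U.InSub w₀ (U.idx c₂) y := ⟨c₂, hd₂, hp₂, rfl⟩
  rcases lt_or_gt_of_ne hii with h | h
  · right; left; exact ⟨w₀, _, _, h, hI₁, hI₂⟩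
  · right; right; exact ⟨w₀, _, _, h, hI₂, hI₁⟩

lemma leftOf_nonzero {x y : ℕ} (h : U.LeftOf x y) :
    ∃ w j₁ j₂, 1 ≤ w ∧ j₁ < j₂ ∧ U.InSub w j₁ x ∧ U.InSub w j₂ y := by
  obtain ⟨w, j₁, j₂, hj, h1, h2⟩ := h
  refine ⟨w, j₁, j₂, ?_, hj, h1, h2⟩
  by_contra hw
  have hw0 : w = 0 := by omega
  subst hw0
  rw [insub_zero h1, insub_zero h2] at hj
  omega

/-- x left of y and y weak-ancestor-of-x is impossible -/
lemma leftOf_descend_false {x y : ℕ} (hL : U.LeftOf x y) (hd : U.Descend x y) : False := by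
  obtain ⟨w, k1, k2, hw1, hk, hx, hy⟩ := leftOf_nonzero hL
  have hyw := insub_descend hw1 hy
  have h' : U.InSub w k1 y := insub_thru hd hyw.1 (by omega) hx
  have := insub_unique h' hy
  omega

/-- x left of y and x weak-ancestor-of-y is impossible -/
lemma leftOf_descend_false' {x y : ℕ} (hL : U.LeftOf x y) (hd : U.Descend y x) : False := by
  obtain ⟨w, k1, k2, hw1, hk, hx, hy⟩ := leftOf_nonzero hL
  have hxw := insub_descend hw1 hx
  have h' : U.InSub w k2 x := insub_thru hd hxw.1 (by omega) hy
  have := insub_unique h' hx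
  omega

lemma leftOf_antisymm {x y : ℕ} (h1 : U.LeftOf x y) (h2 : U.LeftOf y x) : False := by
  obtain ⟨w, k1, k2, hw1, hk, hwx, hwy⟩ := leftOf_nonzero h1
  obtain ⟨w', m1, m2, hw'1, hm, hw'y, hw'x⟩ := leftOf_nonzero h2
  have hdxw := (insub_descend hw1 hwx).1
  have hdxw' := (insub_descend hw'1 hw'x).1
  have hdyw := (insub_descend hw1 hwy).1
  have hdyw' := (insub_descend hw'1 hw'y).1
  rcases descend_total hdxw hdxw' with h | h
  · by_cases he : w = w'
    · subst he
      have e1 := insub_unique hwx hw'x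
      have e2 := insub_unique hwy hw'y
      omega
    · have e1 : U.InSub w' m2 w := insub_thru hdxw h he hw'x
      have e2 : U.InSub w' m1 w := insub_thru hdyw h he hw'y
      have := insub_unique e1 e2
      omega
  · by_cases he : w' = w
    · subst he
      have e1 := insub_unique hwx hw'x
      have e2 := insub_unique hwy hw'y
      omega
    · have e1 : U.InSub w k1 w' := insub_thru hdxw' h he hwx
      have e2 : U.InSub w k2 w' := insub_thru hdyw' h he hwy
      have := insub_unique e1 e2
      omega

end SDecTree
namespace SDecTree

variable {n : ℕ} {s : ℕ → ℕ} {U : SDecTree n s}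

lemma insub_y_le {y j x : ℕ} (hy : 1 ≤ y) (h : U.InSub y j x) : y ≤ n := by
  obtain ⟨c, hd, hp, _⟩ := h
  have hm := descend_mem hd
  have hcn : c < n := by
    rcases lt_or_eq_of_le hm.2.2.2 with h | h
    · exact h
    · exfalso; rw [U.parent_out c (Or.inr h.ge)] at hp; omega
  rw [← hp]; exact U.parent_le c hm.2.2.1 hcn

lemma card_insub {y j x : ℕ} (hj : U.InSub y j x) : U.card y x = j := by
  have h : ∃ j', U.InSub y j' x := ⟨j, hj⟩
  rw [card, dif_pos h]
  exact insub_unique h.choose_spec hj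

lemma card_out {y x : ℕ} (h : ¬ (1 ≤ x ∧ x < y ∧ y ≤ n)) : U.card y x = 0 := by
  by_cases hex : ∃ j, U.InSub y j x
  · obtain ⟨j, hj⟩ := hex
    by_cases hy : 1 ≤ y
    · exfalso
      exact h ⟨(insub_ranges hj).1, (insub_descend hy hj).2, insub_y_le hy hj⟩
    · have hy0 : y = 0 := by omega
      subst hy0
      rw [card_insub hj, insub_zero hj]
  · rw [card, dif_neg hex, if_neg]
    rintro ⟨h1, h2, h3, _⟩
    exact h ⟨h1, h2, h3⟩

lemma card_ne_zero_ranges {y x : ℕ} (h : U.card y x ≠ 0) : 1 ≤ x ∧ x < y ∧ y ≤ n := by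
  by_contra hc
  exact h (card_out hc)

lemma card_left {y x : ℕ} (hL : U.LeftOf x y) : U.card y x = 0 := by
  by_cases hex : ∃ j, U.InSub y j x
  · exfalso
    obtain ⟨j, hj⟩ := hex
    by_cases hy : 1 ≤ y
    · exact leftOf_descend_false hL (insub_descend hy hj).1
    · obtain ⟨w, j₁, j₂, hw1, hlt, h1, h2⟩ := leftOf_nonzero hL
      have := (insub_ranges h2).1
      omega
  · rw [card, dif_neg hex, if_neg]
    rintro ⟨_, _, _, hnL⟩
    exact hnL hL

lemma card_right {y x : ℕ} (h1 : 1 ≤ x) (h2 : x < y) (h3 : y ≤ n)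
    (hex : ¬ ∃ j, U.InSub y j x) (hL : ¬ U.LeftOf x y) : U.card y x = s y := by
  rw [card, dif_neg hex, if_pos ⟨h1, h2, h3, hL⟩]

lemma card_ne_cases {y x : ℕ} (h : U.card y x ≠ 0) :
    (1 ≤ x ∧ x < y ∧ y ≤ n) ∧
      (U.InSub y (U.card y x) x ∨
        (¬ (∃ j, U.InSub y j x) ∧ ¬ U.LeftOf x y ∧ U.card y x = s y)) := by
  refine ⟨card_ne_zero_ranges h, ?_⟩
  by_cases hex : ∃ j, U.InSub y j x
  · left
    obtain ⟨j, hj⟩ := hex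
    rw [card_insub hj]; exact hj
  · right
    refine ⟨hex, ?_, ?_⟩
    · intro hL; exact h (card_left hL)
    · rw [card, dif_neg hex] at h ⊢
      by_cases hc : 1 ≤ x ∧ x < y ∧ y ≤ n ∧ ¬ U.LeftOf x y
      · rw [if_pos hc]
      · rw [if_neg hc] at h; omega

lemma card_descend {x y : ℕ} (h1 : 1 ≤ x) (hd : U.Descend x y) :
    ∀ z, y < z → z ≤ n → U.card z x = U.card z y := by
  intro z hz1 hz2
  have hym := descend_mem hd
  by_cases hz : ∃ j, U.InSub z j y
  · obtain ⟨j, hj⟩ := hz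
    rw [card_insub hj, card_insub (insub_trans hd hj)]
  · have hnx : ¬ ∃ j, U.InSub z j x := by
      rintro ⟨j, hj⟩
      obtain ⟨c'', hd'', hp'', hi''⟩ := hj
      rcases descend_total hd hd'' with h | h
      · exact hz ⟨U.idx c'', c'', h, hp'', rfl⟩
      · by_cases he : c'' = y
        · subst he
          exact hz ⟨U.idx c'', c'', descend_refl hym.2.2.1 hym.2.2.2, hp'', rfl⟩
        · obtain ⟨_, _, hd2⟩ := descend_cons h he
          rw [hp''] at hd2
          have := descend_le hd2
          omega
    have hiff : U.LeftOf x z ↔ U.LeftOf y z := by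
      constructor
      · intro hL
        obtain ⟨w, j1, j2, hw1, hj, hx', hz'⟩ := leftOf_nonzero hL
        obtain ⟨c1, hdc1, hpc1, hic1⟩ := hx'
        have hy' : U.InSub w j1 y := by
          rcases descend_total hd hdc1 with h | h
          · exact ⟨c1, h, hpc1, hic1⟩
          · by_cases he : c1 = y
            · subst he
              exact ⟨c1, descend_refl hym.2.2.1 hym.2.2.2, hpc1, hic1⟩
            · exfalso
              obtain ⟨_, _, hd2⟩ := descend_cons h he
              rw [hpc1] at hd2
              have hdzw := (insub_descend hw1 hz').1
              have := descend_le (descend_trans hdzw hd2)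
              omega
        exact ⟨w, j1, j2, hj, hy', hz'⟩
      · rintro ⟨w, j1, j2, hj, hy', hz'⟩
        exact ⟨w, j1, j2, hj, insub_trans hd hy', hz'⟩
    by_cases hL : U.LeftOf x z
    · rw [card_left hL, card_left (hiff.mp hL)]
    · rw [card_right h1 (by have := descend_le hd; omega) hz2 hnx hL,
        card_right hym.2.2.1 hz1 hz2 hz (fun h => hL (hiff.mpr h))]

lemma descend_of_cards {x y : ℕ} (h1 : 1 ≤ x) (hxy : x < y) (hyn : y ≤ n)
    (H : ∀ z, y < z → z ≤ n → U.card z x = U.card z y) : U.Descend x y := by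
  have key : ∀ m y x, 1 ≤ x → x < y → y ≤ n → n - y ≤ m →
      (∀ z, y < z → z ≤ n → U.card z x = U.card z y) → U.Descend x y := by
    intro m
    induction m with
    | zero =>
      intro y x h1 hxy hyn hm H
      have : y = n := by omega
      subst this
      exact descend_root h1 (by omega)
    | succ m ih =>
      intro y x h1 hxy hyn hm H
      by_cases hyn' : y = n
      · subst hyn'; exact descend_root h1 (by omega)
      · have hylt : y < n := lt_of_le_of_ne hyn hyn'
        have hy1 : 1 ≤ y := by omega
        have hyp : y < U.parent y := U.parent_gt y hy1 hylt
        have hpn : U.parent y ≤ n := U.parent_le y hy1 hylt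
        have hdyp : U.Descend y (U.parent y) := by
          refine ⟨1, by simp, ?_⟩
          intro m' hm'
          interval_cases m'
          · simpa using ⟨hy1, hyn⟩
          · simp only [Function.iterate_one]; exact ⟨by omega, hpn⟩
        have hins : U.InSub (U.parent y) (U.idx y) y :=
          ⟨y, descend_refl hy1 hyn, rfl, rfl⟩
        have hcpy : U.card (U.parent y) y = U.idx y := card_insub hins
        have hcpx : U.card (U.parent y) x = U.idx y := by
          rw [H (U.parent y) hyp hpn, hcpy]
        have H' : ∀ z, U.parent y < z → z ≤ n → U.card z x = U.card z (U.parent y) := by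
          intro z hz1 hz2
          rw [H z (by omega) hz2]
          exact card_descend hy1 hdyp z hz1 hz2
        have hdxp : U.Descend x (U.parent y) :=
          ih (U.parent y) x h1 (by omega) hpn (by omega) H'
        obtain ⟨c', hdc', hpc', hc'1, hc'n⟩ := descend_step hdxp (by omega)
        have hc'lt : c' < n := by
          rcases lt_or_eq_of_le hc'n with h | h
          · exact h
          · exfalso; rw [U.parent_out c' (Or.inr h.ge)] at hpc'; omega
        have hcx : U.card (U.parent y) x = U.idx c' := card_insub ⟨c', hdc', hpc', rfl⟩
        have hic : U.idx c' = U.idx y := by rw [← hcx, hcpx]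
        have : c' = y := U.slot_inj c' y hc'1 hc'lt hy1 hylt hpc' hic
        rw [← this]
        exact hdc'
  exact key (n - y) y x h1 hxy hyn le_rfl H

lemma insub_card_eqs {y j x : ℕ} (hy : 1 ≤ y) (h : U.InSub y j x) :
    (∀ z, y < z → z ≤ n → U.card z x = U.card z y) ∧ U.card y x = j :=
  ⟨card_descend (insub_ranges h).1 (insub_descend hy h).1, card_insub h⟩

lemma insub_of_cards {y j x : ℕ} (h1 : 1 ≤ x) (hxy : x < y) (hyn : y ≤ n)
    (H : ∀ z, y < z → z ≤ n → U.card z x = U.card z y) (hc : U.card y x = j) :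
    U.InSub y j x := by
  have hd := descend_of_cards h1 hxy hyn H
  obtain ⟨j', hj'⟩ := descend_insub_exists hd (by omega)
  have := card_insub hj'
  rw [← hc, this]
  exact hj'

end SDecTree
namespace SDecTree

variable {n : ℕ} {s : ℕ → ℕ} {U : SDecTree n s}

lemma card_trans {x y z : ℕ} (hxy : x < y) (hyz : y < z) (hne : U.card y x ≠ 0) :
    U.card z y ≤ U.card z x := by
  obtain ⟨⟨hx1, _, hyn⟩, hcases⟩ := card_ne_cases hne
  by_cases hzn : z ≤ n
  swap
  · rw [card_out (show ¬ (1 ≤ y ∧ y < z ∧ z ≤ n) by omega)]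
    exact Nat.zero_le _
  have hy1 : 1 ≤ y := by omega
  have hz1 : 1 ≤ z := by omega
  rcases tri hy1 hyz hzn with hdyz | hLyz | hLzy
  · -- A : Descend y z
    obtain ⟨j₀, hj₀⟩ := descend_insub_exists hdyz (by omega)
    have hczy : U.card z y = j₀ := card_insub hj₀
    rcases hcases with hIn | ⟨hnoIn, hnL, hcyx⟩
    · have hdxy := (insub_descend hy1 hIn).1
      rw [hczy, card_insub (insub_trans hdxy hj₀)]
    · have hLyx : U.LeftOf y x := by
        rcases tri hx1 hxy hyn with hd | hL | hR
        · exact absurd (descend_insub_exists hd (by omega)) hnoIn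
        · exact absurd hL hnL
        · exact hR
      obtain ⟨w, k1, k2, hw1, hk, hwy, hwx⟩ := leftOf_nonzero hLyx
      have hdyw := (insub_descend hw1 hwy).1
      have hdxw := (insub_descend hw1 hwx).1
      rcases descend_total hdyw hdyz with hwz | hzw
      · by_cases hwez : w = z
        · subst hwez
          have e1 := insub_unique hwy hj₀
          rw [hczy, card_insub hwx]
          omega
        · have hdxz : U.Descend x z := descend_trans hdxw hwz
          obtain ⟨j', hj'⟩ := descend_insub_exists hdxz (by omega)
          have e1 : U.InSub z j' w := insub_thru hdxw hwz hwez hj'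
          have e2 : U.InSub z j₀ w := insub_thru hdyw hwz hwez hj₀
          rw [hczy, card_insub hj', insub_unique e1 e2]
      · by_cases hzew : z = w
        · subst hzew
          have e1 := insub_unique hwy hj₀
          rw [hczy, card_insub hwx]
          omega
        · have hIzw : U.InSub w k1 z := insub_thru hdyz hzw hzew hwy
          have hnoxz : ¬ ∃ j, U.InSub z j x := by
            rintro ⟨j, hj⟩
            have hdxz := (insub_descend hz1 hj).1
            have e1 : U.InSub w k2 z := insub_thru hdxz hzw hzew hwx
            have := insub_unique e1 hIzw
            omega
          have hnLxz : ¬ U.LeftOf x z := by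
            intro hL
            obtain ⟨w', m1, m2, hw'1, hm, hw'x, hw'z⟩ := leftOf_nonzero hL
            have hdxw' := (insub_descend hw'1 hw'x).1
            have hdzw' := (insub_descend hw'1 hw'z).1
            rcases descend_total hdxw hdxw' with h | h
            · by_cases he : w = w'
              · subst he
                have e1 := insub_unique hw'x hwx
                have e2 := insub_unique hw'z hIzw
                omega
              · have e1 : U.InSub w' m1 w := insub_thru hdxw h he hw'x
                have e2 : U.InSub w' m2 w := insub_thru hzw h he hw'z
                have := insub_unique e1 e2
                omega
            · by_cases he : w' = w
              · subst he
                have e1 := insub_unique hw'x hwx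
                have e2 := insub_unique hw'z hIzw
                omega
              · have e1 : U.InSub w k2 w' := insub_thru hdxw' h he hwx
                have e2 : U.InSub w k1 w' := insub_thru hdzw' h he hIzw
                have := insub_unique e1 e2
                omega
          rw [hczy, card_right hx1 (by omega) hzn hnoxz hnLxz]
          exact insub_le_s hz1 hj₀
  · rw [card_left hLyz]
    exact Nat.zero_le _
  · -- C : LeftOf z y
    have hnozy : ¬ ∃ j, U.InSub z j y := by
      rintro ⟨j, hj⟩
      exact leftOf_descend_false' hLzy (insub_descend hz1 hj).1
    have hnLyz : ¬ U.LeftOf y z := fun h => leftOf_antisymm h hLzy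
    rw [card_right hy1 hyz hzn hnozy hnLyz]
    obtain ⟨w, k1, k2, hw1, hk, hwz, hwy⟩ := leftOf_nonzero hLzy
    have hdzw := (insub_descend hw1 hwz).1
    have hdyw := (insub_descend hw1 hwy).1
    rcases hcases with hIn | ⟨hnoIn, hnL, hcyx⟩
    · -- C1 : x in subtree of y
      have hdxy := (insub_descend hy1 hIn).1
      have hnoxz : ¬ ∃ j, U.InSub z j x := by
        rintro ⟨j, hj⟩
        have hdxz := (insub_descend hz1 hj).1
        rcases descend_total hdxy hdxz with h | h
        · exact hnozy (descend_insub_exists h (by omega))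
        · have := descend_le h
          omega
      have hwx : U.InSub w k2 x := insub_trans hdxy hwy
      have hdxw := (insub_descend hw1 hwx).1
      have hnLxz : ¬ U.LeftOf x z := by
        intro hL
        obtain ⟨w', m1, m2, hw'1, hm, hw'x, hw'z⟩ := leftOf_nonzero hL
        have hdxw' := (insub_descend hw'1 hw'x).1
        have hdzw' := (insub_descend hw'1 hw'z).1
        rcases descend_total hdxw hdxw' with h | h
        · by_cases he : w = w'
          · subst he
            have e1 := insub_unique hw'x hwx
            have e2 := insub_unique hw'z hwz
            omega
          · have e1 : U.InSub w' m1 w := insub_thru hdxw h he hw'x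
            have e2 : U.InSub w' m2 w := insub_thru hdzw h he hw'z
            have := insub_unique e1 e2
            omega
        · by_cases he : w' = w
          · subst he
            have e1 := insub_unique hw'x hwx
            have e2 := insub_unique hw'z hwz
            omega
          · have e1 : U.InSub w k2 w' := insub_thru hdxw' h he hwx
            have e2 : U.InSub w k1 w' := insub_thru hdzw' h he hwz
            have := insub_unique e1 e2
            omega
      rw [card_right hx1 (by omega) hzn hnoxz hnLxz]
    · -- C2 : LeftOf y x
      have hLyx : U.LeftOf y x := by
        rcases tri hx1 hxy hyn with hd | hL | hR
        · exact absurd (descend_insub_exists hd (by omega)) hnoIn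
        · exact absurd hL hnL
        · exact hR
      obtain ⟨v₀, p1, p2, hv1, hp, hvy, hvx⟩ := leftOf_nonzero hLyx
      have hdyv := (insub_descend hv1 hvy).1
      have hdxv := (insub_descend hv1 hvx).1
      have hnoxz : ¬ ∃ j, U.InSub z j x := by
        rintro ⟨j', hj'⟩
        have hdxz := (insub_descend hz1 hj').1
        have hIwx : U.InSub w k1 x := insub_trans hdxz hwz
        rcases descend_total hdyv hdyw with h | h
        · by_cases he : v₀ = w
          · subst he
            have e1 := insub_unique hvy hwy
            have e2 := insub_unique hvx hIwx
            omega
          · have e1 : U.InSub w k2 v₀ := insub_thru hdyv h he hwy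
            have e2 : U.InSub w k1 v₀ := insub_thru hdxv h he hIwx
            have := insub_unique e1 e2
            omega
        · by_cases he : w = v₀
          · subst he
            have e1 := insub_unique hvy hwy
            have e2 := insub_unique hvx hIwx
            omega
          · have e1 : U.InSub v₀ p1 w := insub_thru hdyw h he hvy
            have hdxw := (insub_descend hw1 hIwx).1
            have e2 : U.InSub v₀ p2 w := insub_thru hdxw h he hvx
            have := insub_unique e1 e2
            omega
      have hnLxz : ¬ U.LeftOf x z := by
        intro hL
        obtain ⟨w', m1, m2, hw'1, hm, hw'x, hw'z⟩ := leftOf_nonzero hL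
        have hdzw' := (insub_descend hw'1 hw'z).1
        rcases descend_total hdzw hdzw' with h | h
        · by_cases he : w = w'
          · subst he
            have e1 := insub_unique hwz hw'z
            exact leftOf_antisymm ⟨w, m1, k2, by omega, hw'x, hwy⟩ hLyx
          · have e1 : U.InSub w' m2 w := insub_thru hdzw h he hw'z
            have e2 : U.InSub w' m2 y := insub_trans hdyw e1
            exact leftOf_antisymm ⟨w', m1, m2, hm, hw'x, e2⟩ hLyx
        · by_cases he : w' = w
          · subst he
            have e1 := insub_unique hwz hw'z
            exact leftOf_antisymm ⟨w', m1, k2, by omega, hw'x, hwy⟩ hLyx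
          · have e1 : U.InSub w k1 w' := insub_thru hdzw' h he hwz
            have hdxw' := (insub_descend hw'1 hw'x).1
            have e2 : U.InSub w k1 x := insub_trans hdxw' e1
            exact leftOf_antisymm ⟨w, k1, k2, hk, e2, hwy⟩ hLyx
      rw [card_right hx1 (by omega) hzn hnoxz hnLxz]

end SDecTree
namespace SDecTree

variable {n : ℕ} {s : ℕ → ℕ}

/-- The explicit inversion table of the rotation of `U` along the ascent `(u,v)`. -/
noncomputable def rotCard (U : SDecTree n s) (u v : ℕ) : ℕ → ℕ → ℕ := fun y x =>
  if y = v ∧ U.InSubMinus0 u x then U.card y x + 1 else U.card y x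

variable {U : SDecTree n s} {u v : ℕ}

lemma minus0_descend (hA : U.TreeAscent u v) {x : ℕ} (h : U.InSubMinus0 u x) :
    U.Descend x u := by
  obtain ⟨hu1, huv, hvn, _, _, _⟩ := hA
  rcases h with rfl | ⟨j, hj0, hj⟩
  · exact descend_refl hu1 (by omega)
  · exact (insub_descend hu1 hj).1

lemma minus0_card_v (hA : U.TreeAscent u v) {x : ℕ} (h : U.InSubMinus0 u x) :
    U.card v x = U.card v u := by
  have hd := minus0_descend hA h
  obtain ⟨hu1, huv, hvn, _, _, _⟩ := hA
  exact card_descend (descend_mem hd).1 hd v huv hvn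

lemma rot_trans (hA : U.TreeAscent u v) : IsTransitiveInv (rotCard U u v) := by
  obtain ⟨hu1, huv, hvn, ⟨i, hisv, hiu⟩, hmid, hleaf⟩ := hA
  have hA' : U.TreeAscent u v := ⟨hu1, huv, hvn, ⟨i, hisv, hiu⟩, hmid, hleaf⟩
  have hv1 : 1 ≤ v := by omega
  have hcvu : U.card v u = i := card_insub hiu
  have hduv : U.Descend u v := (insub_descend hv1 hiu).1
  intro x y z hxy hyz
  by_cases h0 : rotCard U u v y x = 0
  · exact Or.inl h0
  right
  have hr : 1 ≤ x ∧ x < y ∧ y ≤ n := by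
    by_cases hb : y = v ∧ U.InSubMinus0 u x
    · have hd := minus0_descend hA' hb.2
      have hm := descend_mem hd
      have hle := descend_le hd
      exact ⟨hm.1, by omega, by omega⟩
    · rw [rotCard, if_neg hb] at h0
      exact card_ne_zero_ranges h0
  obtain ⟨hx1, hxy', hyn⟩ := hr
  by_cases hzn : z ≤ n
  swap
  · have hnc : ¬ (z = v ∧ U.InSubMinus0 u y) := by rintro ⟨rfl, -⟩; exact hzn hvn
    have : rotCard U u v z y = 0 := by
      rw [rotCard, if_neg hnc, card_out (by omega)]
    rw [this]
    exact Nat.zero_le _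
  have hy1 : 1 ≤ y := by omega
  have hz1 : 1 ≤ z := by omega
  by_cases hzv : z = v
  · replace hzv : v = z := hzv.symm
    subst hzv
    have hyv : y ≠ v := by omega
    have hcyx : U.card y x ≠ 0 := by
      rw [rotCard, if_neg (fun h => hyv h.1)] at h0
      exact h0
    by_cases hSy : U.InSubMinus0 u y
    · by_cases hSx : U.InSubMinus0 u x
      · rw [rotCard, rotCard, if_pos ⟨rfl, hSy⟩, if_pos ⟨rfl, hSx⟩,
          minus0_card_v hA' hSy, minus0_card_v hA' hSx]
      · -- hard case : show card v x ≥ i + 1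
        have hdyu : U.Descend y u := minus0_descend hA' hSy
        have hxu : x ≠ u := fun h => hSx (h ▸ Or.inl rfl)
        have hnoxy : ¬ ∃ j, U.InSub y j x := by
          rintro ⟨j, hj⟩
          have hdxy := (insub_descend hy1 hj).1
          have hdxu : U.Descend x u := descend_trans hdxy hdyu
          obtain ⟨j', hj'⟩ := descend_insub_exists hdxu hxu
          have hj'0 : j' = 0 := by
            by_contra h
            exact hSx (Or.inr ⟨j', by omega, hj'⟩)
          by_cases hyu : y = u
          · subst hyu
            have := card_insub hj
            exact hSx (Or.inr ⟨j, by omega, hj⟩)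
          · obtain ⟨jy, hjy0, hjy⟩ := hSy.resolve_left hyu
            have e1 : U.InSub u j' y := insub_thru hdxy hdyu hyu hj'
            have := insub_unique e1 hjy
            omega
        have hLyx : U.LeftOf y x := by
          rcases card_ne_cases hcyx with ⟨_, hIn | ⟨hnoIn, hnL, _⟩⟩
          · exact absurd ⟨_, hIn⟩ hnoxy
          · rcases tri hx1 hxy' hyn with hd | hL | hR
            · exact absurd (descend_insub_exists hd (by omega)) hnoxy
            · exact absurd hL hnL
            · exact hR
        obtain ⟨w, k1, k2, hw1, hk, hwy, hwx⟩ := leftOf_nonzero hLyx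
        have hdyw := (insub_descend hw1 hwy).1
        have hdxw := (insub_descend hw1 hwx).1
        rcases descend_total hdyw hdyu with hwu | huw
        · -- Descend w u
          by_cases hweu : w = u
          · subst hweu
            exact absurd (Or.inr ⟨k2, by omega, hwx⟩) hSx
          · have hdxu := descend_trans hdxw hwu
            obtain ⟨j', hj'⟩ := descend_insub_exists hdxu hxu
            have hj'0 : j' = 0 := by
              by_contra h
              exact hSx (Or.inr ⟨j', by omega, hj'⟩)
            by_cases hyu : y = u
            · subst hyu
              exact absurd (descend_antisymm hwu hdyw) hweu
            · obtain ⟨jy, hjy0, hjy⟩ := hSy.resolve_left hyu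
              have e1 : U.InSub u j' w := insub_thru hdxw hwu hweu hj'
              have e2 : U.InSub u jy w := insub_thru hdyw hwu hweu hjy
              have := insub_unique e1 e2
              omega
        · -- Descend u w
          rcases descend_total huw hduv with hwv | hvw
          · by_cases hwev : w = v
            · replace hwev : v = w := hwev.symm
              subst hwev
              have hk1 : k1 = i := by
                by_cases hyu : y = u
                · subst hyu; exact insub_unique hwy hiu
                · exact insub_unique hwy (insub_trans hdyu hiu)
              rw [rotCard, rotCard, if_pos ⟨rfl, hSy⟩, if_neg (fun h => hSx h.2),
                minus0_card_v hA' hSy, hcvu, card_insub hwx]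
              omega
            · by_cases huew : u = w
              · subst huew
                exact absurd (Or.inr ⟨k2, by omega, hwx⟩) hSx
              · obtain ⟨ju, hju⟩ := descend_insub_exists huw huew
                have hwltv : w < v := lt_of_le_of_ne (descend_le hwv) hwev
                have hultw : u < w := lt_of_le_of_ne (descend_le huw) huew
                have hjus : ju = s w := hmid w ju hultw hwltv hju
                have hk1 : k1 = s w := by
                  by_cases hyu : y = u
                  · subst hyu; rw [insub_unique hwy hju, hjus]
                  · have e : U.InSub w k1 u := insub_thru hdyu huw huew hwy
                    rw [insub_unique e hju, hjus]
                have := insub_le_s hw1 hwx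
                omega
          · by_cases hvew : v = w
            · subst hvew
              have hk1 : k1 = i := by
                by_cases hyu : y = u
                · subst hyu; exact insub_unique hwy hiu
                · exact insub_unique hwy (insub_trans hdyu hiu)
              rw [rotCard, rotCard, if_pos ⟨rfl, hSy⟩, if_neg (fun h => hSx h.2),
                minus0_card_v hA' hSy, hcvu, card_insub hwx]
              omega
            · have hdyv : U.Descend y v := descend_trans hdyu hduv
              have hIvwy : U.InSub w k1 v := insub_thru hdyv hvw hvew hwy
              have hnoxv : ¬ ∃ j, U.InSub v j x := by
                rintro ⟨j, hj⟩
                have hdxv := (insub_descend hv1 hj).1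
                have e : U.InSub w k2 v := insub_thru hdxv hvw hvew hwx
                have := insub_unique e hIvwy
                omega
              have hnLxv : ¬ U.LeftOf x v := by
                intro hL
                obtain ⟨w', m1, m2, hw'1, hm, hw'x, hw'v⟩ := leftOf_nonzero hL
                have hdxw' := (insub_descend hw'1 hw'x).1
                have hdvw' := (insub_descend hw'1 hw'v).1
                rcases descend_total hdxw hdxw' with h | h
                · by_cases he : w = w'
                  · subst he
                    have e1 := insub_unique hw'x hwx
                    have e2 := insub_unique hw'v hIvwy
                    omega
                  · have e1 : U.InSub w' m1 w := insub_thru hdxw h he hw'x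
                    have e2 : U.InSub w' m2 w := insub_thru hvw h he hw'v
                    have := insub_unique e1 e2
                    omega
                · by_cases he : w' = w
                  · subst he
                    have e1 := insub_unique hw'x hwx
                    have e2 := insub_unique hw'v hIvwy
                    omega
                  · have e1 : U.InSub w k2 w' := insub_thru hdxw' h he hwx
                    have e2 : U.InSub w k1 w' := insub_thru hdvw' h he hIvwy
                    have := insub_unique e1 e2
                    omega
              rw [rotCard, rotCard, if_pos ⟨rfl, hSy⟩, if_neg (fun h => hSx h.2),
                minus0_card_v hA' hSy, hcvu,
                card_right hx1 (by omega) hvn hnoxv hnLxv]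
              omega
    · have h1 : rotCard U u v v y = U.card v y := by rw [rotCard, if_neg (fun h => hSy h.2)]
      have h2 : U.card v x ≤ rotCard U u v v x := by
        rw [rotCard]; split <;> omega
      exact h1 ▸ le_trans (card_trans hxy hyz hcyx) h2
  · have hrzy : rotCard U u v z y = U.card z y := by rw [rotCard, if_neg (fun h => hzv h.1)]
    have hrzx : rotCard U u v z x = U.card z x := by rw [rotCard, if_neg (fun h => hzv h.1)]
    rw [hrzy, hrzx]
    by_cases hyv : y = v
    · replace hyv : v = y := hyv.symm
      subst hyv
      by_cases hSx : U.InSubMinus0 u x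
      · have hdxv : U.Descend x v := descend_trans (minus0_descend hA' hSx) hduv
        rw [card_descend hx1 hdxv z hyz hzn]
      · have hcyx : U.card v x ≠ 0 := by
          rw [rotCard, if_neg (fun h => hSx h.2)] at h0
          exact h0
        exact card_trans hxy hyz hcyx
    · have hcyx : U.card y x ≠ 0 := by
        rw [rotCard, if_neg (fun h => hyv h.1)] at h0
        exact h0
      exact card_trans hxy hyz hcyx

lemma rot_ge (hA : U.TreeAscent u v) :
    ∀ y x, addInv s U.card v u y x ≤ rotCard U u v y x := by
  obtain ⟨hu1, huv, hvn, ⟨i, hisv, hiu⟩, hmid, hleaf⟩ := hA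
  have hcvu : U.card v u = i := card_insub hiu
  intro y x
  rw [addInv, rotCard]
  by_cases h : y = v ∧ x = u
  · obtain ⟨rfl, rfl⟩ := h
    rw [if_pos ⟨rfl, rfl⟩, if_pos ⟨rfl, Or.inl rfl⟩]
    omega
  · rw [if_neg h]
    split <;> omega

lemma rot_min (hA : U.TreeAscent u v) (J : ℕ → ℕ → ℕ) (hJt : IsTransitiveInv J)
    (hJle : ∀ y x, addInv s U.card v u y x ≤ J y x) :
    ∀ y x, rotCard U u v y x ≤ J y x := by
  obtain ⟨hu1, huv, hvn, ⟨i, hisv, hiu⟩, hmid, hleaf⟩ := hA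
  have hA' : U.TreeAscent u v := ⟨hu1, huv, hvn, ⟨i, hisv, hiu⟩, hmid, hleaf⟩
  have hcvu : U.card v u = i := card_insub hiu
  have hJvu : i + 1 ≤ J v u := by
    have := hJle v u
    rw [addInv, if_pos ⟨rfl, rfl⟩, hcvu] at this
    omega
  intro y x
  by_cases hb : y = v ∧ U.InSubMinus0 u x
  · obtain ⟨hyv, hSx⟩ := hb
    replace hyv : v = y := hyv.symm
    subst hyv
    rw [rotCard, if_pos ⟨rfl, hSx⟩, minus0_card_v hA' hSx, hcvu]
    rcases hSx with rfl | ⟨jx, hjx0, hjx⟩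
    · exact hJvu
    · have hxltu : x < u := (insub_descend hu1 hjx).2
      have hcux : U.card u x = jx := card_insub hjx
      have hJux : 0 < J u x := by
        have := hJle u x
        rw [addInv, if_neg (fun h => by omega)] at this
        omega
      rcases hJt x u v hxltu huv with h | h
      · omega
      · omega
  · rw [rotCard, if_neg hb]
    have hne : ¬ (y = v ∧ x = u) := fun h => hb ⟨h.1, h.2 ▸ Or.inl rfl⟩
    have := hJle y x
    rw [addInv, if_neg hne] at this
    exact this

lemma rot_card_eq (hA : U.TreeAscent u v) :
    ∀ y x, tcInv (addInv s U.card v u) y x = rotCard U u v y x := by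
  intro y x
  apply le_antisymm
  · exact Nat.sInf_le ⟨rotCard U u v, rot_trans hA, rot_ge hA, rfl⟩
  · exact le_csInf ⟨_, rotCard U u v, rot_trans hA, rot_ge hA, rfl⟩
      (by rintro m ⟨J, hJt, hJle, rfl⟩; exact rot_min hA J hJt hJle y x)

end SDecTree
namespace SDecTree

variable {n : ℕ} {s : ℕ → ℕ}

lemma table_of_insub {V : SDecTree n s} {F : ℕ → ℕ → ℕ}
    (hVC : ∀ y x, 1 ≤ x → x < y → y ≤ n → V.card y x = F y x)
    {y j x : ℕ} (hx1 : 1 ≤ x) (hxy : x < y) (hyn : y ≤ n) (h : V.InSub y j x) :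
    (∀ z, y < z → z ≤ n → F z x = F z y) ∧ F y x = j := by
  obtain ⟨H, hc⟩ := insub_card_eqs (by omega) h
  refine ⟨fun z hz1 hz2 => ?_, ?_⟩
  · rw [← hVC z x hx1 (by omega) hz2, ← hVC z y (by omega) hz1 hz2]
    exact H z hz1 hz2
  · rw [← hVC y x hx1 hxy hyn]
    exact hc

lemma insub_of_table {V : SDecTree n s} {F : ℕ → ℕ → ℕ}
    (hVC : ∀ y x, 1 ≤ x → x < y → y ≤ n → V.card y x = F y x)
    {y j x : ℕ} (hx1 : 1 ≤ x) (hxy : x < y) (hyn : y ≤ n)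
    (H : ∀ z, y < z → z ≤ n → F z x = F z y) (hc : F y x = j) : V.InSub y j x := by
  apply insub_of_cards hx1 hxy hyn
  · intro z hz1 hz2
    rw [hVC z x hx1 (by omega) hz2, hVC z y (by omega) hz1 hz2]
    exact H z hz1 hz2
  · rw [hVC y x hx1 hxy hyn]
    exact hc

variable {T Z Q : SDecTree n s} {a b c d : ℕ}

/-- If the card of `x'` at `c` agrees with that of a vertex of `T^c∖0` other than `c`,
then `x'` is also in `T^c∖0`. -/
lemma spush (hAcd : T.TreeAscent c d) {x x' : ℕ} (hSx : T.InSubMinus0 c x) (hxc : x ≠ c)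
    (h' : T.card c x' = T.card c x) : T.InSubMinus0 c x' := by
  obtain ⟨hc1, hcd, hdn, _, _, hleafcd⟩ := hAcd
  obtain ⟨jx, hjx0, hjx⟩ := hSx.resolve_left hxc
  have hcx : T.card c x = jx := card_insub hjx
  have hne : T.card c x' ≠ 0 := by omega
  by_cases hex : ∃ j', T.InSub c j' x'
  · obtain ⟨j', hj'⟩ := hex
    have : T.card c x' = j' := card_insub hj'
    exact Or.inr ⟨j', by omega, hj'⟩
  · rcases card_ne_cases hne with ⟨_, hIn | ⟨_, _, heq⟩⟩
    · exact absurd ⟨_, hIn⟩ hex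
    · exfalso
      have hjsc : jx = s c := by omega
      exact hleafcd (by omega) x (hjsc ▸ hjx)

/-- If `a ∈ T^c∖0` then `b ≤ c`. -/
lemma sab (hac : a < c) (hAab : T.TreeAscent a b) (hAcd : T.TreeAscent c d)
    (hSa : T.InSubMinus0 c a) : b ≤ c := by
  obtain ⟨ha1, hab, hbn, ⟨i, hisb, hiba⟩, hmidab, hleafab⟩ := hAab
  obtain ⟨hc1, hcd, hdn, -, -, hleafcd⟩ := id hAcd
  have hdac : T.Descend a c := minus0_descend hAcd hSa
  have hdab : T.Descend a b := (insub_descend (by omega) hiba).1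
  rcases descend_total hdab hdac with h | h
  · exact descend_le h
  · by_cases hcb : c = b
    · omega
    · exfalso
      have hclb : c < b := lt_of_le_of_ne (descend_le h) hcb
      obtain ⟨j₃, hj₃0, hj₃⟩ := hSa.resolve_left (by omega)
      have := hmidab c j₃ hac hclb hj₃
      exact hleafcd (by omega) a (this ▸ hj₃)

lemma notSz_of_gt (hAab : T.TreeAscent a b) {x : ℕ} (hx : a < x) :
    ¬ T.InSubMinus0 a x := by
  obtain ⟨ha1, _, _, _, _, _⟩ := hAab
  rintro (rfl | ⟨j, hj0, hj⟩)
  · omega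
  · have := (insub_descend ha1 hj).2
    omega

/-- condition (ii) for `(a,b)` holds in `Q`. -/
lemma stopQ_ii (hac : a < c) (hZ : T.IsRotation Z a b) (hQ : T.IsRotation Q c d) :
    ∀ e j, a < e → e < b → Q.InSub e j a → j = s e := by
  have hAab := hZ.1
  have hAcd := hQ.1
  have QC : ∀ y x, 1 ≤ x → x < y → y ≤ n → Q.card y x = rotCard T c d y x :=
    fun y x h1 h2 h3 => (hQ.2 y x h1 h2 h3).trans (rot_card_eq hQ.1 y x)
  obtain ⟨ha1, hab, hbn, ⟨i, hisb, hiba⟩, hmidab, hleafab⟩ := hZ.1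
  obtain ⟨hc1, hcd, hdn, ⟨i', hisd, hidc⟩, hmidcd, hleafcd⟩ := hQ.1
  have hd1 : 1 ≤ d := by omega
  have hdcd : T.Descend c d := (insub_descend hd1 hidc).1
  have hcdc : T.card d c = i' := card_insub hidc
  intro e j hae heb hQe
  obtain ⟨Hz, Hj⟩ := table_of_insub QC ha1 hae (by omega) hQe
  by_cases hed : e = d
  · -- e = d
    replace hed : d = e := hed.symm
    subst hed
    have hnSa : ¬ T.InSubMinus0 c a := by
      intro h
      have := sab hac hAab hAcd h
      omega
    have Hc : ∀ z, d < z → z ≤ n → T.card z a = T.card z d := by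
      intro z hz1 hz2
      have h := Hz z hz1 hz2
      rw [rotCard, rotCard, if_neg (fun hh => absurd hh.1 (by omega)),
        if_neg (fun hh => absurd hh.1 (by omega))] at h
      exact h
    have Hj' : T.card d a = j := by
      rw [rotCard, if_neg (fun hh => hnSa hh.2)] at Hj
      exact Hj
    exact hmidab d j hae heb (insub_of_cards ha1 hae (by omega) Hc Hj')
  · by_cases hec : e = c
    · -- e = c
      replace hec : c = e := hec.symm
      subst hec
      have hnSa : ¬ T.InSubMinus0 c a := by
        intro h
        have := sab hac hAab hAcd h
        omega
      have hzd := Hz d hcd hdn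
      rw [rotCard, rotCard, if_neg (fun hh => hnSa hh.2), if_pos ⟨rfl, Or.inl rfl⟩, hcdc]
        at hzd
      have hnoInca : ¬ ∃ j', T.InSub c j' a := by
        rintro ⟨j', hj'⟩
        rcases Nat.eq_zero_or_pos j' with h0 | h0
        · have hdac := (insub_descend hc1 hj').1
          have heq := card_descend ha1 hdac d hcd hdn
          rw [heq, hcdc] at hzd
          omega
        · exact hnSa (Or.inr ⟨j', h0, hj'⟩)
      rcases tri (U := T) ha1 hac (by omega) with hda | hL | hR
      · exact absurd (descend_insub_exists hda (by omega)) hnoInca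
      · exfalso
        obtain ⟨w, m1, m2, hw1, hm, hwa, hwc⟩ := leftOf_nonzero hL
        have hdcw := (insub_descend hw1 hwc).1
        rcases descend_total hdcw hdcd with h | h
        · by_cases hwd : w = d
          · replace hwd : d = w := hwd.symm
            subst hwd
            have e2 := insub_unique hwc hidc
            have e3 := card_insub hwa
            omega
          · have hIdw : T.InSub d i' w := insub_thru hdcw h hwd hidc
            have hdaw := (insub_descend hw1 hwa).1
            have := card_insub (insub_trans hdaw hIdw)
            omega
        · by_cases hdw : d = w
          · subst hdw
            have e2 := insub_unique hwc hidc
            have e3 := card_insub hwa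
            omega
          · have hIwd : T.InSub w m2 d := insub_thru hdcd h hdw hwc
            rcases card_ne_cases (show T.card d a ≠ 0 by omega) with ⟨_, hIn | ⟨_, hnL, _⟩⟩
            · have hdad := (insub_descend hd1 hIn).1
              have e2 : T.InSub w m1 d := insub_thru hdad h hdw hwa
              have := insub_unique e2 hIwd
              omega
            · exact hnL ⟨w, m1, m2, hm, hwa, hIwd⟩
      · have hnLac : ¬ T.LeftOf a c := fun h => leftOf_antisymm h hR
        have hsc : T.card c a = s c := card_right ha1 hac (by omega) hnoInca hnLac
        rw [rotCard, if_neg (fun hh => absurd hh.1 (by omega))] at Hj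
        omega
    · -- e ≠ d, e ≠ c
      have hpar : T.InSubMinus0 c a ↔ T.InSubMinus0 c e := by
        constructor
        · intro hSa
          have hblec := sab hac hAab hAcd hSa
          have hec' : e < c := by omega
          have hz := Hz c hec' (by omega)
          rw [rotCard, rotCard, if_neg (fun hh => absurd hh.1 (by omega)),
            if_neg (fun hh => absurd hh.1 (by omega))] at hz
          exact spush hAcd hSa (by omega) hz.symm
        · intro hSe
          have hdec := minus0_descend hAcd hSe
          have hec' : e < c := lt_of_le_of_ne (descend_le hdec) hec
          have hz := Hz c hec' (by omega)
          rw [rotCard, rotCard, if_neg (fun hh => absurd hh.1 (by omega)),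
            if_neg (fun hh => absurd hh.1 (by omega))] at hz
          exact spush hAcd hSe hec hz
      have Hc : ∀ z, e < z → z ≤ n → T.card z a = T.card z e := by
        intro z hz1 hz2
        have h := Hz z hz1 hz2
        by_cases hzd : z = d
        · subst hzd
          by_cases hSa : T.InSubMinus0 c a
          · rw [rotCard, rotCard, if_pos ⟨rfl, hSa⟩, if_pos ⟨rfl, hpar.mp hSa⟩] at h
            omega
          · rw [rotCard, rotCard, if_neg (fun hh => hSa hh.2),
              if_neg (fun hh => (hpar.not.mp hSa) hh.2)] at h
            exact h
        · rw [rotCard, rotCard, if_neg (fun hh => hzd hh.1), if_neg (fun hh => hzd hh.1)] at h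
          exact h
      have Hj' : T.card e a = j := by
        rw [rotCard, if_neg (fun hh => hed hh.1)] at Hj
        exact Hj
      exact hmidab e j hae heb (insub_of_cards ha1 hae (by omega) Hc Hj')

end SDecTree
namespace SDecTree

variable {n : ℕ} {s : ℕ → ℕ} {T Z Q : SDecTree n s} {a b c d : ℕ}

/-- condition (iii) for `(a,b)` holds in `Q`. -/
lemma stopQ_iii (hac : a < c) (hZ : T.IsRotation Z a b) (hQ : T.IsRotation Q c d) :
    0 < s a → ∀ x, ¬ Q.InSub a (s a) x := by
  have hAab := hZ.1
  have hAcd := hQ.1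
  have QC : ∀ y x, 1 ≤ x → x < y → y ≤ n → Q.card y x = rotCard T c d y x :=
    fun y x h1 h2 h3 => (hQ.2 y x h1 h2 h3).trans (rot_card_eq hQ.1 y x)
  obtain ⟨ha1, hab, hbn, ⟨i, hisb, hiba⟩, hmidab, hleafab⟩ := id hZ.1
  obtain ⟨hc1, hcd, hdn, ⟨i', hisd, hidc⟩, hmidcd, hleafcd⟩ := id hQ.1
  intro hsa x hQx
  have han : a ≤ n := by omega
  have hx1 : 1 ≤ x := (insub_ranges hQx).1
  have hxa : x < a := (insub_descend ha1 hQx).2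
  obtain ⟨Hz, Hj⟩ := table_of_insub QC hx1 hxa han hQx
  have Hj' : T.card a x = s a := by
    rw [rotCard, if_neg (fun hh => absurd hh.1 (by omega))] at Hj
    exact Hj
  have hpar : T.InSubMinus0 c x ↔ T.InSubMinus0 c a := by
    have hz := Hz c hac (by omega)
    rw [rotCard, rotCard, if_neg (fun hh => absurd hh.1 (by omega)),
      if_neg (fun hh => absurd hh.1 (by omega))] at hz
    constructor
    · intro hSx
      exact spush hAcd hSx (by omega) hz.symm
    · intro hSa
      exact spush hAcd hSa (by omega) hz
  have Hc : ∀ z, a < z → z ≤ n → T.card z x = T.card z a := by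
    intro z hz1 hz2
    have h := Hz z hz1 hz2
    by_cases hzd : z = d
    · replace hzd : d = z := hzd.symm
      subst hzd
      by_cases hSx : T.InSubMinus0 c x
      · rw [rotCard, rotCard, if_pos ⟨rfl, hSx⟩, if_pos ⟨rfl, hpar.mp hSx⟩] at h
        omega
      · rw [rotCard, rotCard, if_neg (fun hh => hSx hh.2),
          if_neg (fun hh => hSx (hpar.mpr hh.2))] at h
        exact h
    · rw [rotCard, rotCard, if_neg (fun hh => hzd hh.1), if_neg (fun hh => hzd hh.1)] at h
      exact h
  exact hleafab hsa x (insub_of_cards hx1 hxa han Hc Hj')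

/-- condition (i) for `(a,b)` holds in `Q`, unless `b = c` and `a ∈ T^c_0`. -/
lemma stopQ_i (hac : a < c) (hZ : T.IsRotation Z a b) (hQ : T.IsRotation Q c d)
    (hyp : b = c → ¬ T.InSub c 0 a) : ∃ i₀, i₀ < s b ∧ Q.InSub b i₀ a := by
  have hAab := hZ.1
  have hAcd := hQ.1
  have QC : ∀ y x, 1 ≤ x → x < y → y ≤ n → Q.card y x = rotCard T c d y x :=
    fun y x h1 h2 h3 => (hQ.2 y x h1 h2 h3).trans (rot_card_eq hQ.1 y x)
  obtain ⟨ha1, hab, hbn, ⟨i, hisb, hiba⟩, hmidab, hleafab⟩ := id hZ.1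
  obtain ⟨hc1, hcd, hdn, ⟨i', hisd, hidc⟩, hmidcd, hleafcd⟩ := id hQ.1
  refine ⟨i, hisb, ?_⟩
  have HT := insub_card_eqs (show (1:ℕ) ≤ b by omega) hiba
  apply insub_of_table QC ha1 hab hbn
  · intro z hz1 hz2
    by_cases hzd : z = d
    · replace hzd : d = z := hzd.symm
      subst hzd
      by_cases hbc : b = c
      · have hi0 : i ≠ 0 := by
          intro h0
          rw [hbc, h0] at hiba
          exact hyp hbc hiba
        have hSa : T.InSubMinus0 c a := Or.inr ⟨i, by omega, hbc ▸ hiba⟩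
        have hSb : T.InSubMinus0 c b := Or.inl hbc
        rw [rotCard, rotCard, if_pos ⟨rfl, hSa⟩, if_pos ⟨rfl, hSb⟩, HT.1 d hz1 hz2]
      · have hiff : T.InSubMinus0 c a ↔ T.InSubMinus0 c b := by
          constructor
          · intro hSa
            have hblec := sab hac hAab hAcd hSa
            have hdab : T.Descend a b := (insub_descend (by omega) hiba).1
            have hdac : T.Descend a c := minus0_descend hAcd hSa
            obtain ⟨j₃, hj₃0, hj₃⟩ := hSa.resolve_left (by omega)
            rcases descend_total hdab hdac with h | h
            · exact Or.inr ⟨j₃, hj₃0, insub_thru hdab h hbc hj₃⟩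
            · have := descend_le h
              omega
          · intro hSb
            obtain ⟨jb, hjb0, hjb⟩ := hSb.resolve_left hbc
            have hdab : T.Descend a b := (insub_descend (by omega) hiba).1
            exact Or.inr ⟨jb, hjb0, insub_trans hdab hjb⟩
        by_cases hSa : T.InSubMinus0 c a
        · rw [rotCard, rotCard, if_pos ⟨rfl, hSa⟩, if_pos ⟨rfl, hiff.mp hSa⟩,
            HT.1 d hz1 hz2]
        · rw [rotCard, rotCard, if_neg (fun hh => hSa hh.2),
            if_neg (fun hh => hSa (hiff.mpr hh.2)), HT.1 d hz1 hz2]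
    · rw [rotCard, rotCard, if_neg (fun hh => hzd hh.1), if_neg (fun hh => hzd hh.1)]
      exact HT.1 z hz1 hz2
  · have hnb : ¬ (b = d ∧ T.InSubMinus0 c a) := by
      rintro ⟨hbd, hSa⟩
      have := sab hac hAab hAcd hSa
      omega
    rw [rotCard, if_neg hnb]
    exact HT.2

/-- condition (i) for `(c,d)` holds in `Z`. -/
lemma stopZ_i (hac : a < c) (hZ : T.IsRotation Z a b) (hQ : T.IsRotation Q c d) :
    ∃ i₀, i₀ < s d ∧ Z.InSub d i₀ c := by
  have hAab := hZ.1
  have ZC : ∀ y x, 1 ≤ x → x < y → y ≤ n → Z.card y x = rotCard T a b y x :=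
    fun y x h1 h2 h3 => (hZ.2 y x h1 h2 h3).trans (rot_card_eq hZ.1 y x)
  obtain ⟨hc1, hcd, hdn, ⟨i', hisd, hidc⟩, hmidcd, hleafcd⟩ := id hQ.1
  refine ⟨i', hisd, ?_⟩
  have HT := insub_card_eqs (show (1:ℕ) ≤ d by omega) hidc
  have hnc : ¬ T.InSubMinus0 a c := notSz_of_gt hAab hac
  have hnd : ¬ T.InSubMinus0 a d := notSz_of_gt hAab (by omega)
  apply insub_of_table ZC hc1 hcd hdn
  · intro z hz1 hz2
    rw [rotCard, rotCard, if_neg (fun hh => hnc hh.2), if_neg (fun hh => hnd hh.2)]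
    exact HT.1 z hz1 hz2
  · rw [rotCard, if_neg (fun hh => hnc hh.2)]
    exact HT.2

/-- condition (ii) for `(c,d)` holds in `Z`. -/
lemma stopZ_ii (hac : a < c) (hZ : T.IsRotation Z a b) (hQ : T.IsRotation Q c d) :
    ∀ e j, c < e → e < d → Z.InSub e j c → j = s e := by
  have hAab := hZ.1
  have ZC : ∀ y x, 1 ≤ x → x < y → y ≤ n → Z.card y x = rotCard T a b y x :=
    fun y x h1 h2 h3 => (hZ.2 y x h1 h2 h3).trans (rot_card_eq hZ.1 y x)
  obtain ⟨hc1, hcd, hdn, ⟨i', hisd, hidc⟩, hmidcd, hleafcd⟩ := id hQ.1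
  intro e j hce hed hZe
  have hen : e ≤ n := by omega
  obtain ⟨Hz, Hj⟩ := table_of_insub ZC hc1 hce hen hZe
  have hnc : ¬ T.InSubMinus0 a c := notSz_of_gt hAab hac
  have hne : ¬ T.InSubMinus0 a e := notSz_of_gt hAab (by omega)
  have Hc : ∀ z, e < z → z ≤ n → T.card z c = T.card z e := by
    intro z hz1 hz2
    have h := Hz z hz1 hz2
    rw [rotCard, rotCard, if_neg (fun hh => hnc hh.2), if_neg (fun hh => hne hh.2)] at h
    exact h
  have Hj' : T.card e c = j := by
    rw [rotCard, if_neg (fun hh => hnc hh.2)] at Hj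
    exact Hj
  exact hmidcd e j hce hed (insub_of_cards hc1 hce hen Hc Hj')

/-- condition (iii) for `(c,d)` holds in `Z`, unless `b = c` and `a ∈ T^c_{s c - 1}`. -/
lemma stopZ_iii (hac : a < c) (hZ : T.IsRotation Z a b) (hQ : T.IsRotation Q c d)
    (hyp : b = c → ¬ T.InSub c (s c - 1) a) : 0 < s c → ∀ x, ¬ Z.InSub c (s c) x := by
  have hAab := hZ.1
  have hAcd := hQ.1
  have ZC : ∀ y x, 1 ≤ x → x < y → y ≤ n → Z.card y x = rotCard T a b y x :=
    fun y x h1 h2 h3 => (hZ.2 y x h1 h2 h3).trans (rot_card_eq hZ.1 y x)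
  obtain ⟨ha1, hab, hbn, ⟨i, hisb, hiba⟩, hmidab, hleafab⟩ := id hZ.1
  obtain ⟨hc1, hcd, hdn, ⟨i', hisd, hidc⟩, hmidcd, hleafcd⟩ := id hQ.1
  intro hsc x hZx
  have hcn : c ≤ n := by omega
  have hx1 : 1 ≤ x := (insub_ranges hZx).1
  have hxc : x < c := (insub_descend hc1 hZx).2
  obtain ⟨Hz, Hj⟩ := table_of_insub ZC hx1 hxc hcn hZx
  have hcba : T.card b a = i := card_insub hiba
  by_cases hSzx : T.InSubMinus0 a x
  · have hdxa : T.Descend x a := minus0_descend hAab hSzx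
    have hAcxa : T.card c x = T.card c a := card_descend hx1 hdxa c hac hcn
    by_cases hbc : b = c
    · rw [hbc] at hiba hcba
      rw [rotCard, if_pos ⟨hbc.symm, hSzx⟩, hAcxa, hcba] at Hj
      have hieq : i = s c - 1 := by omega
      exact hyp hbc (hieq ▸ hiba)
    · have hAcx : T.card c x = s c := by
        rw [rotCard, if_neg (fun hh => hbc hh.1.symm)] at Hj
        exact Hj
      by_cases hblt : b < c
      · have Hc : ∀ z, c < z → z ≤ n → T.card z x = T.card z c := by
          intro z hz1 hz2
          have h := Hz z hz1 hz2
          rw [rotCard, rotCard, if_neg (fun hh => absurd hh.1 (by omega)),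
            if_neg (fun hh => absurd hh.1 (by omega))] at h
          exact h
        exact hleafcd hsc x (insub_of_cards hx1 hxc hcn Hc hAcx)
      · have hcb : c < b := by omega
        have hzb := Hz b hcb hbn
        rw [rotCard, rotCard, if_pos ⟨rfl, hSzx⟩,
          if_neg (fun hh => (notSz_of_gt hAab hac) hh.2)] at hzb
        have hAbx : T.card b x = i := by
          rw [card_descend hx1 hdxa b hab hbn, hcba]
        have hAbc : T.card b c = i + 1 := by omega
        rcases card_ne_cases (show T.card c x ≠ 0 by omega) with ⟨_, hIn | ⟨hnoIn, hnLxc, _⟩⟩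
        · exact hleafcd hsc x (hAcx ▸ hIn)
        · rcases tri (U := T) ha1 hac hcn with hdac | hLac | hLca
          · exact hnoIn (descend_insub_exists (descend_trans hdxa hdac) (by omega))
          · obtain ⟨w, m1, m2, hw1, hm, hwa, hwc⟩ := leftOf_nonzero hLac
            exact hnLxc ⟨w, m1, m2, hm, insub_trans hdxa hwa, hwc⟩
          · rcases card_ne_cases (show T.card b c ≠ 0 by omega) with
              ⟨_, hIn2 | ⟨hnoIn2, hnLcb, _⟩⟩
            · have hI : T.InSub b (i + 1) c := hAbc ▸ hIn2
              exact leftOf_antisymm ⟨b, i, i + 1, by omega, hiba, hI⟩ hLca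
            · obtain ⟨w, k1, k2, hw1, hk, hwc, hwa⟩ := leftOf_nonzero hLca
              have hdaw := (insub_descend hw1 hwa).1
              have hdab : T.Descend a b := (insub_descend (by omega) hiba).1
              rcases descend_total hdab hdaw with h | h
              · by_cases hbw : b = w
                · subst hbw
                  exact hnoIn2 ⟨k1, hwc⟩
                · exact hnLcb ⟨w, k1, k2, hk, hwc, insub_thru hdab h hbw hwa⟩
              · by_cases hwb : w = b
                · replace hwb : b = w := hwb.symm
                  subst hwb
                  exact hnoIn2 ⟨k1, hwc⟩
                · have hdcw := (insub_descend hw1 hwc).1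
                  exact hnoIn2 (descend_insub_exists (descend_trans hdcw h) (by omega))
  · have hAcx : T.card c x = s c := by
      rw [rotCard, if_neg (fun hh => hSzx hh.2)] at Hj
      exact Hj
    have Hc : ∀ z, c < z → z ≤ n → T.card z x = T.card z c := by
      intro z hz1 hz2
      have h := Hz z hz1 hz2
      rw [rotCard, rotCard, if_neg (fun hh => hSzx hh.2),
        if_neg (fun hh => (notSz_of_gt hAab hac) hh.2)] at h
      exact h
    exact hleafcd hsc x (insub_of_cards hx1 hxc hcn Hc hAcx)

end SDecTree

/-- if `(a,b)` fails to be a tree ascent of `Q` or `(c,d)` fails to be a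
tree ascent of `Z`, then `b = c` and `s c > 0`; moreover in the first case `a ∈ T^c_0`
and in the second case `a ∈ T^c_{s c - 1}`. -/
theorem stop_being_ascent (n : ℕ) (s : ℕ → ℕ) (T Z Q : SDecTree n s)
    (a b c d : ℕ) (hac : a < c)
    (hZ : SDecTree.IsRotation T Z a b) (hQ : SDecTree.IsRotation T Q c d) :
    ((¬ Q.TreeAscent a b ∨ ¬ Z.TreeAscent c d) → b = c ∧ 0 < s c) ∧
    (¬ Q.TreeAscent a b → T.InSub c 0 a) ∧
    (¬ Z.TreeAscent c d → T.InSub c (s c - 1) a) := by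
  obtain ⟨ha1, hab, hbn, ⟨i, hisb, hiba⟩, hmidab, hleafab⟩ := id hZ.1
  obtain ⟨hc1, hcd, hdn, ⟨i', hisd, hidc⟩, hmidcd, hleafcd⟩ := id hQ.1
  have hQA : ∀ _ : (b = c → ¬ T.InSub c 0 a), Q.TreeAscent a b := fun hyp =>
    ⟨ha1, hab, hbn, SDecTree.stopQ_i hac hZ hQ hyp, SDecTree.stopQ_ii hac hZ hQ,
      SDecTree.stopQ_iii hac hZ hQ⟩
  have hZA : ∀ _ : (b = c → ¬ T.InSub c (s c - 1) a), Z.TreeAscent c d := fun hyp =>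
    ⟨hc1, hcd, hdn, SDecTree.stopZ_i hac hZ hQ, SDecTree.stopZ_ii hac hZ hQ,
      SDecTree.stopZ_iii hac hZ hQ hyp⟩
  have hbcQ : ¬ Q.TreeAscent a b → b = c := by
    intro hnQ
    by_contra hbc
    exact hnQ (hQA fun h => absurd h hbc)
  have hbcZ : ¬ Z.TreeAscent c d → b = c := by
    intro hnZ
    by_contra hbc
    exact hnZ (hZA fun h => absurd h hbc)
  refine ⟨?_, ?_, ?_⟩
  · rintro (h | h)
    · exact ⟨hbcQ h, (hbcQ h) ▸ (show 0 < s b by omega)⟩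
    · exact ⟨hbcZ h, (hbcZ h) ▸ (show 0 < s b by omega)⟩
  · intro hnQ
    by_contra hni
    exact hnQ (hQA fun _ => hni)
  · intro hnZ
    by_contra hni
    exact hnZ (hZA fun _ => hni)
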